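/- For M = 2 and β ∈ [0,1), at any point with η_1 < η_2 (so η_min = η_1 ≠ 0 unique), the partial derivative of A^exp with respect to the minimum argument η_1 is strictly greater than the partial derivative with respect to η_2. -/

import Mathlib

/-- Effective conjunction robustness `η_i^conj`. -/
noncomputable def etaConj (ηmin ηi : ℝ) : ℝ :=
  if ηmin < 0 then ηmin * Real.exp ((ηi - ηmin) / ηmin)
  else if 0 < ηmin then ηmin * (2 - Real.exp ((ηmin - ηi) / ηmin))
  else 0

/-- Exponential conjunction robustness for `M = 2` in the region where the first
argument is the minimum: `A^exp(a,b) = β·a + (1-β)·(1/2)·(a + η^conj(b))`. -/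
noncomputable def Aexp2 (β a b : ℝ) : ℝ :=
  β * a + (1 - β) * (1 / 2) * (a + etaConj a b)

lemma key1 (t : ℝ) (ht : t < 0) : Real.exp t * (1 + t) < 1 := by
  have h := Real.add_one_lt_exp (show -t ≠ 0 by linarith)
  have he : Real.exp t * Real.exp (-t) = 1 := by
    rw [← Real.exp_add]; simp
  nlinarith [Real.exp_pos t, Real.exp_pos (-t),
    mul_pos (Real.exp_pos t) (show (0:ℝ) < -t by linarith)]

lemma key2 (s : ℝ) (hs : s < 0) : Real.exp s * (3 - s) < 3 := by
  have h := Real.add_one_lt_exp (show -s ≠ 0 by linarith)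
  have he : Real.exp s * Real.exp (-s) = 1 := by
    rw [← Real.exp_add]; simp
  nlinarith [Real.exp_pos s, Real.exp_pos (-s),
    mul_pos (Real.exp_pos s) (show (0:ℝ) < -s by linarith)]

theorem Aexp2_partial_min_gt (β : ℝ) (hβ0 : 0 ≤ β) (hβ1 : β < 1)
    (η₁ η₂ : ℝ) (hlt : η₁ < η₂) (h0 : η₁ ≠ 0) :
    deriv (fun b => Aexp2 β η₁ b) η₂ < deriv (fun a => Aexp2 β a η₂) η₁ := by
  rcases lt_or_gt_of_ne h0 with hneg | hpos
  · -- η₁ < 0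
    have ht : (η₂ - η₁) / η₁ < 0 := div_neg_of_pos_of_neg (by linarith) hneg
    set E := Real.exp ((η₂ - η₁) / η₁) with hE
    have hEpos : 0 < E := Real.exp_pos _
    -- derivative in b
    have hfb : (fun b => Aexp2 β η₁ b) =
        fun b => β * η₁ + (1 - β) * (1 / 2) * (η₁ + η₁ * Real.exp ((b - η₁) / η₁)) := by
      funext b; simp [Aexp2, etaConj, hneg]
    have hb : HasDerivAt (fun b => β * η₁ + (1 - β) * (1 / 2) *
        (η₁ + η₁ * Real.exp ((b - η₁) / η₁))) ((1 - β) * (1 / 2) * E) η₂ := by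
      have h1 : HasDerivAt (fun b : ℝ => (b - η₁) / η₁) (1 / η₁) η₂ :=
        ((hasDerivAt_id η₂).sub_const η₁).div_const η₁
      have h2 := (((h1.exp.const_mul η₁).const_add η₁).const_mul
        ((1 - β) * (1 / 2))).const_add (β * η₁)
      refine h2.congr_deriv ?_
      field_simp
      rfl
    have hdb : deriv (fun b => Aexp2 β η₁ b) η₂ = (1 - β) * (1 / 2) * E := by
      rw [hfb]; exact hb.deriv
    -- derivative in a
    have hev : (fun a => Aexp2 β a η₂) =ᶠ[nhds η₁]
        (fun a => β * a + (1 - β) * (1 / 2) * (a + a * Real.exp ((η₂ - a) / a))) := by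
      filter_upwards [Iio_mem_nhds hneg] with a ha
      simp [Aexp2, etaConj, show a < 0 from ha]
    have ha : HasDerivAt (fun a => β * a + (1 - β) * (1 / 2) *
        (a + a * Real.exp ((η₂ - a) / a)))
        (β + (1 - β) * (1 / 2) * (1 + E * (1 - η₂ / η₁))) η₁ := by
      have h1 : HasDerivAt (fun a : ℝ => η₂ - a) (-1) η₁ :=
        (hasDerivAt_id η₁).const_sub η₂
      have hu := h1.div (hasDerivAt_id η₁) h0
      have he := hu.exp
      have hm := (hasDerivAt_id η₁).mul he
      have h2 := ((hasDerivAt_id η₁).const_mul β).add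
        (((hasDerivAt_id η₁).add hm).const_mul ((1 - β) * (1 / 2)))
      refine h2.congr_deriv ?_
      simp only [id, Pi.div_apply, hE]
      field_simp
      ring
    have hda : deriv (fun a => Aexp2 β a η₂) η₁ =
        β + (1 - β) * (1 / 2) * (1 + E * (1 - η₂ / η₁)) := by
      rw [hev.deriv_eq]; exact ha.deriv
    rw [hdb, hda]
    have hk := key1 _ ht
    have h1t : 1 - η₂ / η₁ = -((η₂ - η₁) / η₁) := by field_simp; ring
    rw [h1t]
    nlinarith [mul_pos (show (0:ℝ) < 1 - β by linarith)
      (show (0:ℝ) < 1 - E * (1 + (η₂ - η₁) / η₁) by linarith)]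
  · -- η₁ > 0
    have hnn : ¬ η₁ < 0 := not_lt.mpr hpos.le
    have hs : (η₁ - η₂) / η₁ < 0 := div_neg_of_neg_of_pos (by linarith) hpos
    set E := Real.exp ((η₁ - η₂) / η₁) with hE
    have hEpos : 0 < E := Real.exp_pos _
    -- derivative in b
    have hfb : (fun b => Aexp2 β η₁ b) =
        fun b => β * η₁ + (1 - β) * (1 / 2) *
          (η₁ + η₁ * (2 - Real.exp ((η₁ - b) / η₁))) := by
      funext b; simp [Aexp2, etaConj, hnn, hpos]
    have hb : HasDerivAt (fun b => β * η₁ + (1 - β) * (1 / 2) *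
        (η₁ + η₁ * (2 - Real.exp ((η₁ - b) / η₁)))) ((1 - β) * (1 / 2) * E) η₂ := by
      have h1 : HasDerivAt (fun b : ℝ => (η₁ - b) / η₁) (-1 / η₁) η₂ :=
        ((hasDerivAt_id η₂).const_sub η₁).div_const η₁
      have h2 := (((((h1.exp.const_sub 2).const_mul η₁).const_add η₁).const_mul
        ((1 - β) * (1 / 2)))).const_add (β * η₁)
      refine h2.congr_deriv ?_
      field_simp
      rfl
    have hdb : deriv (fun b => Aexp2 β η₁ b) η₂ = (1 - β) * (1 / 2) * E := by
      rw [hfb]; exact hb.deriv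
    -- derivative in a
    have hev : (fun a => Aexp2 β a η₂) =ᶠ[nhds η₁]
        (fun a => β * a + (1 - β) * (1 / 2) *
          (a + a * (2 - Real.exp ((a - η₂) / a)))) := by
      filter_upwards [Ioi_mem_nhds hpos] with a ha
      simp [Aexp2, etaConj, not_lt.mpr (le_of_lt (show 0 < a from ha)), show 0 < a from ha]
    have ha : HasDerivAt (fun a => β * a + (1 - β) * (1 / 2) *
        (a + a * (2 - Real.exp ((a - η₂) / a))))
        (β + (1 - β) * (1 / 2) * (3 - E * (1 + η₂ / η₁))) η₁ := by
      have h1 : HasDerivAt (fun a : ℝ => a - η₂) 1 η₁ := (hasDerivAt_id η₁).sub_const η₂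
      have hu := h1.div (hasDerivAt_id η₁) h0
      have hm := (hasDerivAt_id η₁).mul (hu.exp.const_sub 2)
      have h2 := ((hasDerivAt_id η₁).const_mul β).add
        (((hasDerivAt_id η₁).add hm).const_mul ((1 - β) * (1 / 2)))
      refine h2.congr_deriv ?_
      simp only [id, Pi.div_apply, hE]
      field_simp
      ring
    have hda : deriv (fun a => Aexp2 β a η₂) η₁ =
        β + (1 - β) * (1 / 2) * (3 - E * (1 + η₂ / η₁)) := by
      rw [hev.deriv_eq]; exact ha.deriv
    rw [hdb, hda]
    have hk := key2 _ hs
    have h1t : 1 + η₂ / η₁ = 2 - (η₁ - η₂) / η₁ := by field_simp; ring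
    rw [h1t]
    nlinarith [mul_pos (show (0:ℝ) < 1 - β by linarith)
      (show (0:ℝ) < 3 - E * (3 - (η₁ - η₂) / η₁) by linarith)]
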